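/- arXiv:1803.06203 — 2 statements merged into one kernel-verified Lean document; each statement's English description precedes it below -/
import Mathlib

section
/- Let C be a t×q matrix over a field K and N a q×d matrix whose columns form a basis of the null space of C. Let C' be a t'×q' matrix and L a q'×q matrix such that C'·L·v = 0 for every v in the null space of C. Let Q₁ be a q'×r matrix whose columns form an orthonormal basis of the column space of L·N, let Q₂ be a q'×(q'−r) matrix whose columns complete Q₁ to an orthonormal basis of K^{q'}, and let V₂ be a matrix whose columns form a basis of the null space of C'·Q₂. Then the columns of the concatenated matrix [Q₁ | Q₂·V₂] form a basis of the null space of C'. -/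
open Matrix

/-- The columns of the matrix `M` form a basis of the submodule `S`. -/
def ColsBasis {a b : Type*} (M : Matrix a b ℂ) (S : Submodule ℂ (a → ℂ)) : Prop :=
  LinearIndependent ℂ (fun j : b => fun i : a => M i j) ∧
    Submodule.span ℂ (Set.range (fun j : b => fun i : a => M i j)) = S

lemma cols_eq_transpose {a b : Type*} (M : Matrix a b ℂ) :
    (fun j : b => fun i : a => M i j) = Mᵀ := rfl

lemma sum_smul_cols {a b : Type*} [Fintype a] [Fintype b] (M : Matrix a b ℂ) (g : b → ℂ) :
    ∑ j, g j • (fun i => M i j) = M.mulVec g := by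
  funext i
  simp [Matrix.mulVec, dotProduct, Finset.sum_apply, mul_comm]

lemma colsBasis_iff {a b : Type*} [Fintype a] [Fintype b] (M : Matrix a b ℂ) (S : Submodule ℂ (a → ℂ)) :
    ColsBasis M S ↔ (∀ g, M.mulVec g = 0 → g = 0) ∧ LinearMap.range M.mulVecLin = S := by
  constructor
  · rintro ⟨h1, h2⟩
    refine ⟨fun g hg => ?_, ?_⟩
    · rw [Fintype.linearIndependent_iff] at h1
      funext j
      exact h1 g (by rw [sum_smul_cols, hg]) j
    · rw [Matrix.range_mulVecLin]; exact h2
  · rintro ⟨h1, h2⟩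
    refine ⟨?_, ?_⟩
    · rw [Fintype.linearIndependent_iff]
      intro g hg j
      rw [sum_smul_cols] at hg
      exact congrFun (h1 g hg) j
    · rw [cols_eq_transpose]; exact (Matrix.range_mulVecLin M).symm.trans h2

theorem stmt_3 {t q t' q' d r e : ℕ} (hr : r ≤ q')
    (C : Matrix (Fin t) (Fin q) ℂ) (N : Matrix (Fin q) (Fin d) ℂ)
    (hN : ColsBasis N (LinearMap.ker C.mulVecLin))
    (C' : Matrix (Fin t') (Fin q') ℂ) (L : Matrix (Fin q') (Fin q) ℂ)
    (hL : ∀ v, C.mulVec v = 0 → C'.mulVec (L.mulVec v) = 0)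
    (Q₁ : Matrix (Fin q') (Fin r) ℂ) (Q₂ : Matrix (Fin q') (Fin (q' - r)) ℂ)
    (hQ : (Matrix.fromCols Q₁ Q₂)ᴴ * Matrix.fromCols Q₁ Q₂ = 1)
    (hQ1 : Submodule.span ℂ (Set.range (fun j : Fin r => fun i : Fin q' => Q₁ i j))
      = LinearMap.range (L * N).mulVecLin)
    (V₂ : Matrix (Fin (q' - r)) (Fin e) ℂ)
    (hV₂ : ColsBasis V₂ (LinearMap.ker (C' * Q₂).mulVecLin)) :
    ColsBasis (Matrix.fromCols Q₁ (Q₂ * V₂)) (LinearMap.ker C'.mulVecLin) := by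
  rw [colsBasis_iff] at hN hV₂ ⊢
  obtain ⟨hNinj, hNrange⟩ := hN
  obtain ⟨hVinj, hVrange⟩ := hV₂
  -- equivalence witnessing squareness
  have e' : (Fin r ⊕ Fin (q' - r)) ≃ Fin q' :=
    finSumFinEquiv.trans (finCongr (Nat.add_sub_cancel' hr))
  -- unpack hQ into block identities
  rw [Matrix.conjTranspose_fromCols_eq_fromRows_conjTranspose,
    Matrix.fromRows_mul_fromCols, ← Matrix.fromBlocks_one, Matrix.fromBlocks_inj] at hQ
  obtain ⟨h11, h12, h21, h22⟩ := hQ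
  -- Q * Qᴴ = 1
  have hQQt : Q₁ * Q₁ᴴ + Q₂ * Q₂ᴴ = 1 := by
    have h1 : Matrix.fromRows Q₁ᴴ Q₂ᴴ * Matrix.fromCols Q₁ Q₂ = 1 := by
      rw [Matrix.fromRows_mul_fromCols, ← Matrix.fromBlocks_one]
      exact Matrix.fromBlocks_inj.mpr ⟨h11, h12, h21, h22⟩
    have h2 := (Matrix.mul_eq_one_comm_of_equiv e').mp h1
    rwa [Matrix.fromCols_mul_fromRows] at h2
  -- C' * Q₁ = 0
  have hCLN : ∀ v, C'.mulVec ((L * N).mulVec v) = 0 := by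
    intro v
    rw [← Matrix.mulVec_mulVec]
    apply hL
    have : N.mulVec v ∈ LinearMap.ker C.mulVecLin := by
      rw [← hNrange]; exact ⟨v, rfl⟩
    simpa using this
  have hcolQ₁ : ∀ j, C'.mulVec (fun i => Q₁ i j) = 0 := by
    intro j
    have hmem : (fun i => Q₁ i j) ∈ LinearMap.range (L * N).mulVecLin := by
      rw [← hQ1]
      exact Submodule.subset_span (Set.mem_range_self j)
    obtain ⟨v, hv⟩ := hmem
    rw [← hv]
    exact hCLN v
  have hCQ1 : C' * Q₁ = 0 := by
    ext i j
    have := congrFun (hcolQ₁ j) i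
    simpa [Matrix.mul_apply, Matrix.mulVec, dotProduct] using this
  -- C' * (Q₂ * V₂) = 0
  have hCQ2V : C' * (Q₂ * V₂) = 0 := by
    have h0 : ∀ j, (C' * Q₂).mulVec (fun k => V₂ k j) = 0 := by
      intro j
      have hmem : (fun k => V₂ k j) ∈ LinearMap.ker (C' * Q₂).mulVecLin := by
        rw [← hVrange]
        exact ⟨Pi.single j 1, by funext k; simp [Matrix.mulVec_single]⟩
      simpa using hmem
    have h1 : (C' * Q₂) * V₂ = 0 := by
      ext i j
      have := congrFun (h0 j) i
      simpa [Matrix.mul_apply, Matrix.mulVec, dotProduct] using this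
    rw [← Matrix.mul_assoc]
    exact h1
  constructor
  · -- injectivity
    intro g hg
    have hgdecomp : g = Sum.elim (fun i => g (Sum.inl i)) (fun i => g (Sum.inr i)) := by
      funext x; cases x <;> rfl
    rw [hgdecomp, Matrix.fromCols_mulVec_sumElim] at hg
    set a := fun i => g (Sum.inl i)
    set c := fun i => g (Sum.inr i)
    have ha : a = 0 := by
      have := congrArg (Q₁ᴴ.mulVec ·) hg
      simp only [Matrix.mulVec_add, Matrix.mulVec_mulVec, Matrix.mulVec_zero] at this
      rwa [h11, ← Matrix.mul_assoc, h12, Matrix.zero_mul, Matrix.zero_mulVec, add_zero,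
        Matrix.one_mulVec] at this
    rw [ha, Matrix.mulVec_zero, zero_add] at hg
    have hc : c = 0 := by
      apply hVinj
      have := congrArg (Q₂ᴴ.mulVec ·) hg
      simp only [Matrix.mulVec_mulVec, Matrix.mulVec_zero] at this
      rwa [← Matrix.mul_assoc, h22, Matrix.one_mul] at this
    funext x
    cases x with
    | inl i => exact congrFun ha i
    | inr i => exact congrFun hc i
  · -- range = kernel
    apply le_antisymm
    · rintro x ⟨g, rfl⟩
      simp only [Matrix.mulVecLin_apply, LinearMap.mem_ker]
      rw [Matrix.mulVec_mulVec, Matrix.mul_fromCols, hCQ1, hCQ2V,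
        Matrix.fromCols_zero, Matrix.zero_mulVec]
    · intro x hx
      have hx0 : C'.mulVec x = 0 := hx
      set a := Q₁ᴴ.mulVec x with ha
      set b := Q₂ᴴ.mulVec x with hb
      have hxdecomp : x = Q₁.mulVec a + Q₂.mulVec b := by
        rw [ha, hb, Matrix.mulVec_mulVec, Matrix.mulVec_mulVec, ← Matrix.add_mulVec, hQQt,
          Matrix.one_mulVec]
      have hbker : (C' * Q₂).mulVec b = 0 := by
        have h := congrArg (C'.mulVec ·) hxdecomp
        simp only [Matrix.mulVec_add, Matrix.mulVec_mulVec] at h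
        rw [hCQ1, Matrix.zero_mulVec, zero_add, hx0] at h
        exact h.symm
      have hbmem : b ∈ LinearMap.range V₂.mulVecLin := by
        rw [hVrange]; exact hbker
      obtain ⟨c, hc⟩ := hbmem
      refine ⟨Sum.elim a c, ?_⟩
      simp only [Matrix.mulVecLin_apply, Matrix.fromCols_mulVec_sumElim]
      rw [← Matrix.mulVec_mulVec]
      have hcb : V₂.mulVec c = b := hc
      rw [hcb, ← hxdecomp]
end

section
/- Given polynomials F = {f₁,…,f_s} and any polynomial p ∈ P over ℝ (or ℂ) with a fixed inner product on each P_k, there exist polynomials q_f, f ∈ F, and a remainder r such that p = Σ_{f∈F} q_f·f + r, deg(q_f·f) ≤ deg(p) for all f, and each homogeneous component r^k of r lies in W_k(F), the orthogonal complement of M_k(F) in P_k. -/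
/-- The leading form of a polynomial: its homogeneous component of top degree. -/
noncomputable def lf {n : ℕ} (f : MvPolynomial (Fin n) ℝ) : MvPolynomial (Fin n) ℝ :=
  MvPolynomial.homogeneousComponent f.totalDegree f

/-- The space `M_k(F)`, spanned by the monomial multiples of the leading forms
of elements of `F` that are homogeneous of degree `k`. -/
noncomputable def Mk {n s : ℕ} (f : Fin s → MvPolynomial (Fin n) ℝ) (k : ℕ) :
    Submodule ℝ (MvPolynomial (Fin n) ℝ) :=
  Submodule.span ℝ {g | ∃ (i : Fin s) (α : Fin n →₀ ℕ),
    (∑ j, α j) + (f i).totalDegree = k ∧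
    g = MvPolynomial.monomial α (1 : ℝ) * lf (f i)}

/-- `W_k(F)`: the orthogonal complement of `M_k(F)` within `P_k`, with respect to
the inner product `B`. -/
noncomputable def Wk {n s : ℕ} (f : Fin s → MvPolynomial (Fin n) ℝ)
    (B : MvPolynomial (Fin n) ℝ →ₗ[ℝ] MvPolynomial (Fin n) ℝ →ₗ[ℝ] ℝ) (k : ℕ) :
    Submodule ℝ (MvPolynomial (Fin n) ℝ) :=
  MvPolynomial.homogeneousSubmodule (Fin n) ℝ k ⊓
    ⨅ m : Mk f k, LinearMap.ker (B (m : MvPolynomial (Fin n) ℝ))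

open MvPolynomial

lemma hC_top_ne {n : ℕ} {g : MvPolynomial (Fin n) ℝ} (hg : g ≠ 0) :
    homogeneousComponent g.totalDegree g ≠ 0 := by
  obtain ⟨d, hd, hdeg⟩ := Finset.exists_mem_eq_sup g.support
    (support_nonempty.2 hg) (fun s => s.sum fun _ e => e)
  intro h0
  have : coeff d (homogeneousComponent g.totalDegree g) = coeff d g := by
    rw [coeff_homogeneousComponent, if_pos]
    exact hdeg.symm
  rw [h0] at this
  exact (mem_support_iff.1 hd) (by simpa using this.symm)

lemma totalDegree_le_of_hC {n : ℕ} {g : MvPolynomial (Fin n) ℝ} {D : ℕ}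
    (h : ∀ k, D < k → homogeneousComponent k g = 0) : g.totalDegree ≤ D := by
  by_contra hc
  push_neg at hc
  have hg : g ≠ 0 := by
    rintro rfl
    simp at hc
  exact hC_top_ne hg (h _ hc)

lemma degree_eq_sum {n : ℕ} (α : Fin n →₀ ℕ) : α.degree = ∑ j, α j := by
  rw [Finsupp.degree]
  exact Finset.sum_subset (Finset.subset_univ _) (by simp)

lemma mono_lf_homog {n s : ℕ} (f : Fin s → MvPolynomial (Fin n) ℝ) {k : ℕ}
    (i : Fin s) (α : Fin n →₀ ℕ) (hα : (∑ j, α j) + (f i).totalDegree = k) :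
    (MvPolynomial.monomial α (1 : ℝ) * lf (f i)) ∈ homogeneousSubmodule (Fin n) ℝ k := by
  rw [mem_homogeneousSubmodule, ← hα]
  exact (isHomogeneous_monomial (1 : ℝ) (degree_eq_sum α)).mul
    (homogeneousComponent_isHomogeneous _ _)

lemma Mk_le {n s : ℕ} (f : Fin s → MvPolynomial (Fin n) ℝ) (k : ℕ) :
    Mk f k ≤ homogeneousSubmodule (Fin n) ℝ k := by
  rw [Mk, Submodule.span_le]
  rintro g ⟨i, α, hα, rfl⟩
  exact mono_lf_homog f i α hα

lemma Mk_fd {n s : ℕ} (f : Fin s → MvPolynomial (Fin n) ℝ) (k : ℕ) :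
    FiniteDimensional ℝ (Mk f k) := by
  have h : Mk f k ≤ restrictTotalDegree (Fin n) ℝ k := by
    refine (Mk_le f k).trans fun p hp => ?_
    rw [mem_restrictTotalDegree]
    exact ((mem_homogeneousSubmodule _ _).1 hp).totalDegree_le
  exact Submodule.finiteDimensional_of_le h

lemma exists_proj {n s : ℕ} (f : Fin s → MvPolynomial (Fin n) ℝ)
    (B : MvPolynomial (Fin n) ℝ →ₗ[ℝ] MvPolynomial (Fin n) ℝ →ₗ[ℝ] ℝ)
    (hsymm : ∀ a b, B a b = B b a) (hpos : ∀ a, a ≠ 0 → 0 < B a a) (d : ℕ)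
    (v : MvPolynomial (Fin n) ℝ) (hv : v ∈ homogeneousSubmodule (Fin n) ℝ d) :
    ∃ m ∈ Mk f d, v - m ∈ Wk f B d := by
  haveI := Mk_fd f d
  set M := Mk f d
  have hnd : (LinearMap.BilinForm.restrict B M).Nondegenerate := by
    suffices hL : (LinearMap.BilinForm.restrict B M).SeparatingLeft from
      ⟨hL, fun x hx => hL x fun y => by
        have := hx y; simp only [LinearMap.BilinForm.restrict_apply, LinearMap.domRestrict_apply] at this ⊢; rw [hsymm]; exact this⟩
    intro x hx
    by_contra h0
    have hx0 : (x : MvPolynomial (Fin n) ℝ) ≠ 0 := by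
      simpa [Submodule.coe_eq_zero] using h0
    have := hpos x hx0
    have h2 := hx x
    simp [LinearMap.BilinForm.restrict_apply] at h2
    linarith
  set φ : Module.Dual ℝ M := (B.flip v).comp M.subtype with hφ
  set m₀ : M := ((LinearMap.BilinForm.restrict B M).toDual hnd).symm φ with hm₀
  have key : ∀ u : M, B (m₀ : MvPolynomial (Fin n) ℝ) u = B (u : MvPolynomial (Fin n) ℝ) v := by
    intro u
    have := LinearMap.BilinForm.apply_toDual_symm_apply
      (B := LinearMap.BilinForm.restrict B M) (hB := hnd) φ u
    simp only [LinearMap.BilinForm.restrict_apply] at this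
    simpa [hφ] using this
  refine ⟨m₀, m₀.2, ?_⟩
  rw [Wk]
  refine Submodule.mem_inf.2 ⟨sub_mem hv (Mk_le f d m₀.2), ?_⟩
  rw [Submodule.mem_iInf]
  intro u
  rw [LinearMap.mem_ker, map_sub]
  have : B (u : MvPolynomial (Fin n) ℝ) (m₀ : MvPolynomial (Fin n) ℝ)
      = B (u : MvPolynomial (Fin n) ℝ) v := by
    rw [hsymm]; exact key u
  rw [this, sub_self]

lemma lf_rest_deg {n : ℕ} (g : MvPolynomial (Fin n) ℝ) (k : ℕ) (hk : g.totalDegree ≤ k) :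
    homogeneousComponent k (g - lf g) = 0 := by
  have hlf : homogeneousComponent k (lf g) = if k = g.totalDegree then lf g else 0 :=
    homogeneousComponent_of_mem (homogeneousComponent_isHomogeneous _ _)
  rw [map_sub, hlf]
  by_cases h : k = g.totalDegree
  · rw [if_pos h, lf, h, sub_self]
  · rw [if_neg h, sub_zero]
    exact homogeneousComponent_eq_zero _ _ (lt_of_le_of_ne hk (Ne.symm h))

lemma gen_hC {n : ℕ} (g : MvPolynomial (Fin n) ℝ) (α : Fin n →₀ ℕ) (d : ℕ)
    (hα : (∑ j, α j) + g.totalDegree = d) (k : ℕ) (hk : d ≤ k) :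
    homogeneousComponent k (MvPolynomial.monomial α (1 : ℝ) * g)
      = if k = d then MvPolynomial.monomial α (1 : ℝ) * lf g else 0 := by
  have hrest : homogeneousComponent k (MvPolynomial.monomial α (1:ℝ) * (g - lf g)) = 0 := by
    by_cases h0 : g - lf g = 0
    · rw [h0, mul_zero, map_zero]
    · apply homogeneousComponent_eq_zero
      have h1 : (g - lf g).totalDegree < g.totalDegree := by
        have h2 : (g - lf g).totalDegree ≤ g.totalDegree := by
          apply totalDegree_le_of_hC
          intro j hj
          exact lf_rest_deg g j (le_of_lt hj)
        rcases eq_or_lt_of_le h2 with h3 | h3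
        · exfalso
          have h4 := lf_rest_deg g g.totalDegree le_rfl
          rw [← h3] at h4
          exact hC_top_ne h0 h4
        · exact h3
      calc (MvPolynomial.monomial α (1:ℝ) * (g - lf g)).totalDegree
          ≤ (MvPolynomial.monomial α (1:ℝ)).totalDegree + (g - lf g).totalDegree :=
            totalDegree_mul _ _
        _ < k := by
            rw [totalDegree_monomial α (one_ne_zero)]
            have : (α.sum fun _ e => e) = ∑ j, α j := by
              exact Finset.sum_subset (Finset.subset_univ _) (by simp)
            omega
  have hsplit : MvPolynomial.monomial α (1:ℝ) * g
      = MvPolynomial.monomial α (1:ℝ) * lf g + MvPolynomial.monomial α (1:ℝ) * (g - lf g) := by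
    ring
  rw [hsplit, map_add, hrest, add_zero,
    homogeneousComponent_of_mem (mono_lf_homog (fun _ : Fin 1 => g) 0 α hα)]

lemma rep_of_mem_Mk {n s : ℕ} (f : Fin s → MvPolynomial (Fin n) ℝ) (d : ℕ)
    {m : MvPolynomial (Fin n) ℝ} (hm : m ∈ Mk f d) :
    ∃ h : Fin s → MvPolynomial (Fin n) ℝ, (∑ i, h i * lf (f i)) = m ∧
      ∀ i k, d ≤ k → homogeneousComponent k (h i * f i)
        = if k = d then h i * lf (f i) else 0 := by
  induction hm using Submodule.span_induction with
  | mem g hg =>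
      obtain ⟨i0, α, hα, rfl⟩ := hg
      refine ⟨Pi.single i0 (MvPolynomial.monomial α (1:ℝ)), ?_, ?_⟩
      · rw [Finset.sum_eq_single i0]
        · rw [Pi.single_eq_same]
        · intro b _ hb; rw [Pi.single_eq_of_ne hb, zero_mul]
        · intro h; exact absurd (Finset.mem_univ i0) h
      · intro i k hk
        by_cases hi : i = i0
        · subst hi
          rw [Pi.single_eq_same]
          exact gen_hC (f i) α d hα k hk
        · rw [Pi.single_eq_of_ne hi, zero_mul, map_zero]
          split <;> simp [Pi.single_eq_of_ne hi]
  | zero => exact ⟨0, by simp, by intro i k hk; simp⟩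
  | add x y _ _ hx hy =>
      obtain ⟨h1, hs1, hp1⟩ := hx
      obtain ⟨h2, hs2, hp2⟩ := hy
      refine ⟨h1 + h2, ?_, ?_⟩
      · simp only [Pi.add_apply, add_mul, Finset.sum_add_distrib, hs1, hs2]
      · intro i k hk
        simp only [Pi.add_apply, add_mul, map_add, hp1 i k hk, hp2 i k hk]
        split <;> simp [add_mul]
  | smul c x _ hx =>
      obtain ⟨h1, hs1, hp1⟩ := hx
      refine ⟨c • h1, ?_, ?_⟩
      · simp only [Pi.smul_apply, smul_mul_assoc, ← Finset.smul_sum, hs1]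
      · intro i k hk
        simp only [Pi.smul_apply, smul_mul_assoc, map_smul, hp1 i k hk]
        split <;> simp

lemma aux_red {n s : ℕ} (f : Fin s → MvPolynomial (Fin n) ℝ)
    (B : MvPolynomial (Fin n) ℝ →ₗ[ℝ] MvPolynomial (Fin n) ℝ →ₗ[ℝ] ℝ)
    (hsymm : ∀ a b, B a b = B b a) (hpos : ∀ a, a ≠ 0 → 0 < B a a) (d : ℕ) :
    ∀ p : MvPolynomial (Fin n) ℝ, (∀ k, d ≤ k → homogeneousComponent k p = 0) →
    ∃ (q : Fin s → MvPolynomial (Fin n) ℝ) (r : MvPolynomial (Fin n) ℝ),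
      p = ∑ i, q i * f i + r ∧
      (∀ i k, d ≤ k → homogeneousComponent k (q i * f i) = 0) ∧
      ∀ k, homogeneousComponent k r ∈ Wk f B k := by
  induction d with
  | zero =>
      intro p hp
      have hp0 : p = 0 := by
        conv_lhs => rw [← sum_homogeneousComponent p]
        exact Finset.sum_eq_zero fun i _ => hp i (Nat.zero_le _)
      exact ⟨0, 0, by simp [hp0], fun i k _ => by simp, fun k => by
        simp only [map_zero]; exact Submodule.zero_mem _⟩
  | succ d ih =>
      intro p hp
      set v := homogeneousComponent d p with hv
      obtain ⟨m, hmM, hwW⟩ := exists_proj f B hsymm hpos d v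
        ((mem_homogeneousSubmodule _ _).2 (homogeneousComponent_isHomogeneous _ _))
      obtain ⟨h, hsum, hhC⟩ := rep_of_mem_Mk f d hmM
      set w := v - m with hwdef
      have hwP : w ∈ homogeneousSubmodule (Fin n) ℝ d := (Submodule.mem_inf.1 hwW).1
      have hCw : ∀ k, homogeneousComponent k w = if k = d then w else 0 :=
        fun k => homogeneousComponent_of_mem hwP
      set p' := p - (∑ i, h i * f i) - w with hp'def
      have hp' : ∀ k, d ≤ k → homogeneousComponent k p' = 0 := by
        intro k hk
        rw [hp'def, map_sub, map_sub, map_sum]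
        rcases eq_or_lt_of_le hk with h1 | h1
        · subst h1
          rw [hCw, if_pos rfl]
          have heach : ∀ i ∈ Finset.univ,
              homogeneousComponent d (h i * f i) = h i * lf (f i) := by
            intro i _; rw [hhC i d le_rfl, if_pos rfl]
          rw [Finset.sum_congr rfl heach, hsum, ← hv, hwdef]
          ring
        · rw [hp k (by omega), hCw, if_neg (by omega)]
          have heach : ∀ i ∈ Finset.univ,
              homogeneousComponent k (h i * f i) = 0 := by
            intro i _; rw [hhC i k hk, if_neg (by omega)]
          rw [Finset.sum_congr rfl heach, Finset.sum_const_zero]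
          ring
      obtain ⟨q', r', heq, hq', hr'⟩ := ih p' hp'
      refine ⟨fun i => h i + q' i, r' + w, ?_, ?_, ?_⟩
      · have hs : p = (∑ i, h i * f i) + p' + w := by rw [hp'def]; ring
        rw [hs, heq]
        simp only [add_mul, Finset.sum_add_distrib]
        ring
      · intro i k hk
        rw [add_mul, map_add, hq' i k (by omega), hhC i k (by omega), if_neg (by omega), add_zero]
      · intro k
        rw [map_add, hCw k]
        by_cases hkd : k = d
        · rw [if_pos hkd, hkd]
          exact Submodule.add_mem _ (hr' d) hwW
        · rw [if_neg hkd, add_zero]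
          exact hr' k

theorem stmt_15 {n s : ℕ} (f : Fin s → MvPolynomial (Fin n) ℝ)
    (B : MvPolynomial (Fin n) ℝ →ₗ[ℝ] MvPolynomial (Fin n) ℝ →ₗ[ℝ] ℝ)
    (hsymm : ∀ a b, B a b = B b a) (hpos : ∀ a, a ≠ 0 → 0 < B a a)
    (p : MvPolynomial (Fin n) ℝ) :
    ∃ (q : Fin s → MvPolynomial (Fin n) ℝ) (r : MvPolynomial (Fin n) ℝ),
      p = ∑ i, q i * f i + r ∧
      (∀ i, (q i * f i).totalDegree ≤ p.totalDegree) ∧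
      ∀ k : ℕ, MvPolynomial.homogeneousComponent k r ∈ Wk f B k := by
  obtain ⟨q, r, heq, hq, hr⟩ := aux_red f B hsymm hpos (p.totalDegree + 1) p
    (fun k hk => homogeneousComponent_eq_zero _ _ (by omega))
  exact ⟨q, r, heq, fun i => totalDegree_le_of_hC (fun k hk => hq i k (by omega)), hr⟩
end
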